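/- Let ℓ ≥ 0 and m be integers with 0 ≤ m ≤ ℓ, and let P_ℓ be the Legendre polynomial of degree ℓ. Then for all real x: (d^m/dx^m) P_ℓ(x) = Σ_{q=m}^{⌊(ℓ+m)/2⌋} ((ℓ+m)!·(-1)^{q-m}·2^{m-2q} / ((ℓ+m-2q)!·q!·(q-m)!)) · (1-x²)^{q-m} · x^{ℓ+m-2q}. Equivalently, the associated Legendre function P_ℓ^m(x) = (1-x²)^{m/2}·(d^m/dx^m)P_ℓ(x) admits the stated development. -/

import Mathlib

open Finset Polynomial

/-- The Legendre polynomial of degree `ℓ`, via Rodrigues' formula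
`P_ℓ = (1/(2^ℓ ℓ!)) (d/dx)^ℓ (x²-1)^ℓ`. -/
noncomputable def legendre (ℓ : ℕ) : Polynomial ℝ :=
  Polynomial.C (1 / ((2 : ℝ) ^ ℓ * Nat.factorial ℓ)) *
    Polynomial.derivative^[ℓ] ((Polynomial.X ^ 2 - 1) ^ ℓ)

-- termwise step lemma
lemma step_term (n s t : ℕ) :
    (2:ℝ)^(n+2-2*(t+1)) * (Nat.descFactorial (n+2) (2*(t+1)) : ℝ) /
        (Nat.factorial (t+1) * Nat.factorial (s+(t+1)))
      = 2 * ((2:ℝ)^(n+1-2*(t+1)) * (Nat.descFactorial (n+1) (2*(t+1)) : ℝ) /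
          (Nat.factorial (t+1) * Nat.factorial (s+(t+1))))
        + 2*(n+1) * ((2:ℝ)^(n-2*t) * (Nat.descFactorial n (2*t) : ℝ) /
          (Nat.factorial t * Nat.factorial ((s+1)+t))) := by
  have h1 : Nat.descFactorial (n+2) (2*(t+1)) = (n+2)*((n+1)*Nat.descFactorial n (2*t)) := by
    rw [show 2*(t+1) = (2*t+1)+1 from by ring, Nat.succ_descFactorial_succ,
      Nat.succ_descFactorial_succ]
  have h2 : Nat.descFactorial (n+1) (2*(t+1)) = (n+1)*((n-2*t)*Nat.descFactorial n (2*t)) := by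
    rw [show 2*(t+1) = (2*t+1)+1 from by ring, Nat.succ_descFactorial_succ,
      Nat.descFactorial_succ]
  have hs : ((s+1)+t) = s + (t+1) := by ring
  rw [h1, h2, hs]
  rcases lt_trichotomy n (2*t) with h | h | h
  · rw [Nat.descFactorial_of_lt h]
    simp
  · subst h
    simp only [show 2*t+2-2*(t+1) = 0 from by omega, show 2*t+1-2*(t+1) = 0 from by omega,
      show 2*t-2*t = 0 from by omega, Nat.sub_self, pow_zero]
    have ht : (Nat.factorial (t+1) : ℝ) = (t+1) * Nat.factorial t := by
      push_cast [Nat.factorial_succ]; ring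
    rw [ht]
    have h0 : (Nat.factorial t : ℝ) ≠ 0 := by positivity
    have h0' : (Nat.factorial (s+(t+1)) : ℝ) ≠ 0 := by positivity
    push_cast
    field_simp
    ring
  · obtain ⟨r, rfl⟩ : ∃ r, n = 2*t+1+r := ⟨n-(2*t+1), by omega⟩
    simp only [show 2*t+1+r+2-2*(t+1) = r+1 from by omega,
      show 2*t+1+r+1-2*(t+1) = r from by omega, show 2*t+1+r-2*t = r+1 from by omega]
    have ht : (Nat.factorial (t+1) : ℝ) = (t+1) * Nat.factorial t := by
      push_cast [Nat.factorial_succ]; ring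
    rw [ht]
    have h0 : (Nat.factorial t : ℝ) ≠ 0 := by positivity
    have h0' : (Nat.factorial (s+(t+1)) : ℝ) ≠ 0 := by positivity
    push_cast
    field_simp
    ring

lemma key_sum : ∀ (a s : ℕ),
    (∑ t ∈ range (a+1), (2:ℝ)^(a-2*t) * (Nat.descFactorial a (2*t) : ℝ) /
        (Nat.factorial t * Nat.factorial (s+t)))
      = (Nat.factorial (2*a+2*s) : ℝ) / (Nat.factorial (a+2*s) * Nat.factorial (a+s)) := by
  intro a
  induction a using Nat.strong_induction_on with
  | _ a ih =>
    match a with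
    | 0 =>
      intro s
      have h0 : ((2*s).factorial : ℝ) ≠ 0 := by positivity
      simp [Nat.factorial]
      field_simp
    | 1 =>
      intro s
      rw [Finset.sum_range_succ, Finset.sum_range_one]
      rw [show Nat.descFactorial 1 (2*1) = 0 from rfl]
      simp only [Nat.cast_zero, mul_zero, zero_mul, zero_div, add_zero, Nat.mul_zero,
        Nat.descFactorial_zero, Nat.cast_one, mul_one, Nat.factorial_zero, Nat.add_zero,
        Nat.sub_zero, pow_one, one_mul, Nat.cast_ofNat]
      simp only [show 2*1+2*s = (2*s+1)+1 from by ring, show 1+2*s = 2*s+1 from by ring,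
        show 1+s = s+1 from by ring, Nat.factorial_succ]
      have h0 : (Nat.factorial s : ℝ) ≠ 0 := by positivity
      have h1 : (Nat.factorial (2*s+1) : ℝ) ≠ 0 := by positivity
      push_cast
      field_simp
      ring
    | (n+2) =>
      intro s
      have ih1 := ih (n+1) (by omega) s
      have ih0 := ih n (by omega) (s+1)
      rw [Finset.sum_range_succ']
      have hterm : ∀ t ∈ range (n+2),
          (2:ℝ)^(n+2-2*(t+1)) * (Nat.descFactorial (n+2) (2*(t+1)) : ℝ) /
            (Nat.factorial (t+1) * Nat.factorial (s+(t+1)))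
          = 2 * ((2:ℝ)^(n+1-2*(t+1)) * (Nat.descFactorial (n+1) (2*(t+1)) : ℝ) /
              (Nat.factorial (t+1) * Nat.factorial (s+(t+1))))
            + 2*(n+1) * ((2:ℝ)^(n-2*t) * (Nat.descFactorial n (2*t) : ℝ) /
              (Nat.factorial t * Nat.factorial ((s+1)+t))) := fun t _ => step_term n s t
      rw [Finset.sum_congr rfl hterm, Finset.sum_add_distrib, ← Finset.mul_sum, ← Finset.mul_sum]
      have hA : (∑ t ∈ range (n+2), (2:ℝ)^(n+1-2*(t+1)) * (Nat.descFactorial (n+1) (2*(t+1)) : ℝ) /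
            (Nat.factorial (t+1) * Nat.factorial (s+(t+1))))
          = (∑ t ∈ range (n+2), (2:ℝ)^(n+1-2*t) * (Nat.descFactorial (n+1) (2*t) : ℝ) /
            (Nat.factorial t * Nat.factorial (s+t)))
            - (2:ℝ)^(n+1) / (Nat.factorial s) := by
        have h1 := Finset.sum_range_succ' (fun t => (2:ℝ)^(n+1-2*t) *
            (Nat.descFactorial (n+1) (2*t) : ℝ) / (Nat.factorial t * Nat.factorial (s+t))) (n+1)
        have h2 := Finset.sum_range_succ (fun t => (2:ℝ)^(n+1-2*(t+1)) *
            (Nat.descFactorial (n+1) (2*(t+1)) : ℝ) /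
            (Nat.factorial (t+1) * Nat.factorial (s+(t+1)))) (n+1)
        rw [h2, h1, Nat.descFactorial_of_lt (show n+1 < 2*(n+1+1) from by omega)]
        simp [Nat.factorial]
      have hB : (∑ t ∈ range (n+2), (2:ℝ)^(n-2*t) * (Nat.descFactorial n (2*t) : ℝ) /
            (Nat.factorial t * Nat.factorial ((s+1)+t)))
          = (∑ t ∈ range (n+1), (2:ℝ)^(n-2*t) * (Nat.descFactorial n (2*t) : ℝ) /
            (Nat.factorial t * Nat.factorial ((s+1)+t))) := by
        rw [Finset.sum_range_succ, Nat.descFactorial_of_lt (by omega)]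
        simp
      rw [hA, hB, ih1, ih0]
      have f0 : (2:ℝ)^(n+2-2*0) * (Nat.descFactorial (n+2) (2*0) : ℝ) /
          (Nat.factorial 0 * Nat.factorial (s+0)) = (2:ℝ)^(n+2) / Nat.factorial s := by
        simp
      rw [f0]
      simp only [show 2*(n+2)+2*s = ((2*n+2*s+1)+1)+1+1 from by ring,
        show 2*(n+1)+2*s = (2*n+2*s+1)+1 from by ring,
        show 2*n+2*(s+1) = (2*n+2*s+1)+1 from by ring,
        show (n+2)+2*s = (n+2*s+1)+1 from by ring,
        show (n+1)+2*s = n+2*s+1 from by ring,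
        show n+2*(s+1) = (n+2*s+1)+1 from by ring,
        show (n+2)+s = (n+s+1)+1 from by ring,
        show (n+1)+s = n+s+1 from by ring,
        show n+(s+1) = n+s+1 from by ring,
        Nat.factorial_succ]
      have h0 : (Nat.factorial s : ℝ) ≠ 0 := by positivity
      have h1 : (Nat.factorial (2*n+2*s+1) : ℝ) ≠ 0 := by positivity
      have h2 : (Nat.factorial (n+2*s+1) : ℝ) ≠ 0 := by positivity
      have h3 : (Nat.factorial (n+s+1) : ℝ) ≠ 0 := by positivity
      push_cast
      field_simp
      ring

lemma legendre_inner_sum (ℓ m s : ℕ) (hm : m ≤ ℓ) (hs1 : m ≤ s) (hs2 : s ≤ (ℓ+m)/2) (x : ℝ) :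
    ∑ t ∈ Finset.range ((ℓ+m)/2 - s + 1),
      ((Nat.factorial (ℓ+m) : ℝ) * (-1:ℝ)^(s+t-m) * (2:ℝ)^((m:ℤ) - 2*(↑(s+t))) /
        ((Nat.factorial (ℓ+m-2*(s+t)) : ℝ) * (Nat.factorial (s+t) : ℝ) *
          (Nat.factorial (s+t-m) : ℝ)))
        * ((-1:ℝ)^t * ((s+t-m).choose t : ℝ) * x^(2*t)) * x^(ℓ+m-2*(s+t))
    = (1/((2:ℝ)^ℓ * Nat.factorial ℓ)) * ((-1:ℝ)^(ℓ-(ℓ+m-s)) * (ℓ.choose (ℓ+m-s) : ℝ) *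
        (Nat.descFactorial (2*(ℓ+m-s)) (ℓ+m) : ℝ) * x^(2*(ℓ+m-s)-(ℓ+m))) := by
  obtain ⟨b, rfl⟩ : ∃ b, s = m + b := ⟨s-m, by omega⟩
  have h2s : 2*(m+b) ≤ ℓ+m := by omega
  obtain ⟨a, rfl⟩ : ∃ a, ℓ = m + 2*b + a := ⟨ℓ-(m+2*b), by omega⟩
  have hrange : (m+2*b+a+m)/2 - (m+b) + 1 = a/2 + 1 := by omega
  rw [hrange]
  have hterm : ∀ t ∈ range (a/2+1),
      ((Nat.factorial (m+2*b+a+m) : ℝ) * (-1:ℝ)^((m+b)+t-m) * (2:ℝ)^((m:ℤ) - 2*(↑((m+b)+t))) /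
        ((Nat.factorial (m+2*b+a+m-2*((m+b)+t)) : ℝ) * (Nat.factorial ((m+b)+t) : ℝ) *
          (Nat.factorial ((m+b)+t-m) : ℝ)))
        * ((-1:ℝ)^t * (((m+b)+t-m).choose t : ℝ) * x^(2*t)) * x^(m+2*b+a+m-2*((m+b)+t))
      = ((Nat.factorial (2*m+2*b+a) : ℝ) * (-1:ℝ)^b * x^a /
          ((2:ℝ)^(m+2*b+a) * (Nat.factorial a : ℝ) * (Nat.factorial b : ℝ)))
        * ((2:ℝ)^(a-2*t) * (Nat.descFactorial a (2*t) : ℝ) /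
          (Nat.factorial t * Nat.factorial ((m+b)+t))) := by
    intro t ht
    rw [Finset.mem_range] at ht
    have ht' : 2*t ≤ a := by omega
    have e1 : (m+b)+t-m = b+t := by omega
    have e2 : m+2*b+a+m-2*((m+b)+t) = a-2*t := by omega
    have e3 : m+2*b+a+m = 2*m+2*b+a := by ring
    rw [e1, e2, e3]
    rw [show (m:ℤ) - 2*(↑((m+b)+t)) = ((a-2*t : ℕ) : ℤ) - ((m+2*b+a : ℕ) : ℤ) from by
      push_cast; omega]
    rw [zpow_sub₀ (by norm_num : (2:ℝ) ≠ 0), zpow_natCast, zpow_natCast]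
    rw [Nat.cast_choose ℝ (show t ≤ b+t from by omega), show b+t-t = b from by omega]
    have hdne : (Nat.descFactorial a (2*t) : ℝ) ≠ 0 := by
      rw [Nat.cast_ne_zero]
      simp only [ne_eq, Nat.descFactorial_eq_zero_iff_lt]
      omega
    have hfd : ((a-2*t).factorial : ℝ) = (a.factorial : ℝ) / (Nat.descFactorial a (2*t) : ℝ) := by
      rw [eq_div_iff hdne]
      exact_mod_cast congrArg (Nat.cast (R := ℝ)) (Nat.factorial_mul_descFactorial ht')
    rw [hfd]
    have hbt : ((-1:ℝ))^(b+t) = (-1)^b * (-1)^t := pow_add _ _ _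
    rw [hbt]
    have hx : x^(2*t) * x^(a-2*t) = x^a := by rw [← pow_add]; congr 1; omega
    have n1 : (Nat.factorial t : ℝ) ≠ 0 := by positivity
    have n2 : (Nat.factorial b : ℝ) ≠ 0 := by positivity
    have n3 : (Nat.factorial a : ℝ) ≠ 0 := by positivity
    have n4 : (Nat.factorial ((m+b)+t) : ℝ) ≠ 0 := by positivity
    have n5 : (Nat.factorial (b+t) : ℝ) ≠ 0 := by positivity
    have hsq : ((-1:ℝ)^t) * ((-1:ℝ)^t) = 1 := by
      rw [← pow_add, ← two_mul, pow_mul]; norm_num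
    field_simp
    ring_nf
    have g1 : ((-1:ℝ))^(t*2) = 1 := by rw [pow_mul']; norm_num
    have g2 : x^(t*2) * x^(a-t*2) = x^a := by rw [← pow_add]; congr 1; omega
    rw [g1]
    linear_combination g2
  rw [Finset.sum_congr rfl hterm, ← Finset.mul_sum]
  have hext : (∑ t ∈ range (a/2+1), (2:ℝ)^(a-2*t) * (Nat.descFactorial a (2*t) : ℝ) /
      (Nat.factorial t * Nat.factorial ((m+b)+t)))
      = ∑ t ∈ range (a+1), (2:ℝ)^(a-2*t) * (Nat.descFactorial a (2*t) : ℝ) /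
      (Nat.factorial t * Nat.factorial ((m+b)+t)) := by
    refine Finset.sum_subset (by intro t ht; simp only [Finset.mem_range] at *; omega) ?_
    intro t ht hnt
    simp only [Finset.mem_range] at ht hnt
    rw [Nat.descFactorial_of_lt (by omega)]
    simp
  have hkey := key_sum a (m+b)
  rw [hext, hkey]
  have c1 : m+2*b+a+m-(m+b) = a+b+m := by omega
  have c2 : m+2*b+a-(a+b+m) = b := by omega
  have c3 : 2*(a+b+m)-(m+2*b+a+m) = a := by omega
  have c4 : 2*a+2*(m+b) = 2*(a+b+m) := by ring
  have c5 : a+2*(m+b) = 2*m+2*b+a := by ring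
  have c6 : a+(m+b) = a+b+m := by ring
  rw [c1, c2, c4, c5, c6]
  have hdesc : ((Nat.descFactorial (2*(a+b+m)) (m+2*b+a+m)) : ℝ)
      = ((2*(a+b+m)).factorial : ℝ) / (a.factorial : ℝ) := by
    have h := Nat.factorial_mul_descFactorial (show m+2*b+a+m ≤ 2*(a+b+m) from by omega)
    rw [c3] at h
    rw [eq_div_iff (by positivity : (a.factorial : ℝ) ≠ 0)]
    rw [mul_comm]
    exact_mod_cast congrArg (Nat.cast (R := ℝ)) h
  rw [hdesc]
  rw [Nat.cast_choose ℝ (show a+b+m ≤ m+2*b+a from by omega), c2]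
  rw [show 2*(a+b+m)-(m+2*b+a+m) = a from c3]
  have n1 : (Nat.factorial a : ℝ) ≠ 0 := by positivity
  have n2 : (Nat.factorial b : ℝ) ≠ 0 := by positivity
  have n3 : (Nat.factorial (a+b+m) : ℝ) ≠ 0 := by positivity
  have n4 : (Nat.factorial (2*m+2*b+a) : ℝ) ≠ 0 := by positivity
  have n5 : (Nat.factorial (m+2*b+a) : ℝ) ≠ 0 := by positivity
  have n6 : ((2:ℝ))^(m+2*b+a) ≠ 0 := by positivity
  field_simp

lemma partA (ℓ m : ℕ) (x : ℝ) :
    (Polynomial.derivative^[m] (legendre ℓ)).eval x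
      = ∑ k ∈ range (ℓ+1), (1/((2:ℝ)^ℓ * Nat.factorial ℓ)) *
          ((-1:ℝ)^(ℓ-k) * (ℓ.choose k) * (Nat.descFactorial (2*k) (ℓ+m)) * x^(2*k-(ℓ+m))) := by
  have hexp : ((Polynomial.X : ℝ[X])^2 - 1)^ℓ
      = ∑ k ∈ range (ℓ+1), Polynomial.C ((-1:ℝ)^(ℓ-k) * (ℓ.choose k)) * Polynomial.X^(2*k) := by
    rw [sub_eq_add_neg, add_pow]
    refine Finset.sum_congr rfl fun k hk => ?_
    rw [← pow_mul]
    ring_nf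
    simp [map_mul, map_pow, map_neg, map_one, map_natCast]
    ring
  rw [legendre, Polynomial.iterate_derivative_C_mul, ← Function.iterate_add_apply, hexp,
    Polynomial.iterate_derivative_sum]
  simp only [Polynomial.iterate_derivative_C_mul, Polynomial.iterate_derivative_X_pow_eq_C_mul,
    Polynomial.eval_mul, Polynomial.eval_C, Polynomial.eval_finset_sum, Polynomial.eval_pow,
    Polynomial.eval_X, Finset.mul_sum]
  refine Finset.sum_congr rfl fun k hk => ?_
  rw [show m + ℓ = ℓ + m from by ring]
  ring

/-- Explicit development of the `m`-th derivative of the Legendre polynomial `P_ℓ`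
(equivalently, of the associated Legendre function `P_ℓ^m(x) = (1-x²)^{m/2} P_ℓ^{(m)}(x)`). -/
theorem legendre_deriv_explicit (ℓ m : ℕ) (hm : m ≤ ℓ) (x : ℝ) :
    (Polynomial.derivative^[m] (legendre ℓ)).eval x
      = ∑ q ∈ Finset.Icc m ((ℓ + m) / 2),
          ((Nat.factorial (ℓ + m) : ℝ) * (-1 : ℝ) ^ (q - m) * (2 : ℝ) ^ ((m : ℤ) - 2 * q) /
              ((Nat.factorial (ℓ + m - 2 * q) : ℝ) * (Nat.factorial q : ℝ) *
                (Nat.factorial (q - m) : ℝ))) *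
            (1 - x ^ 2) ^ (q - m) * x ^ (ℓ + m - 2 * q) := by
  set Q := (ℓ + m) / 2 with hQ
  set f : ℕ → ℝ := fun k => (1/((2:ℝ)^ℓ * Nat.factorial ℓ)) *
      ((-1:ℝ)^(ℓ-k) * (ℓ.choose k) * (Nat.descFactorial (2*k) (ℓ+m)) * x^(2*k-(ℓ+m))) with hf
  have h1 : (Polynomial.derivative^[m] (legendre ℓ)).eval x = ∑ k ∈ range (ℓ+1), f k :=
    partA ℓ m x
  -- restrict and reindex the left side
  have h2 : ∑ k ∈ range (ℓ+1), f k = ∑ k ∈ Finset.Icc (ℓ+m-Q) ℓ, f k := by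
    refine (Finset.sum_subset ?_ ?_).symm
    · intro k hk
      simp only [Finset.mem_Icc] at hk
      simp only [Finset.mem_range]
      omega
    · intro k hk hnk
      simp only [Finset.mem_range] at hk
      simp only [Finset.mem_Icc] at hnk
      have h2k : 2*k < ℓ+m := by omega
      simp only [hf]
      rw [Nat.descFactorial_of_lt h2k]
      simp
  have h3 : ∑ k ∈ Finset.Icc (ℓ+m-Q) ℓ, f k = ∑ s ∈ Finset.Icc m Q, f (ℓ+m-s) := by
    refine Finset.sum_nbij' (fun k => ℓ+m-k) (fun s => ℓ+m-s) ?_ ?_ ?_ ?_ ?_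
    · intro k hk; simp only [Finset.mem_Icc] at *; omega
    · intro s hs; simp only [Finset.mem_Icc] at *; omega
    · intro k hk
      simp only [Finset.mem_Icc] at hk
      show ℓ+m-(ℓ+m-k) = k
      omega
    · intro s hs
      simp only [Finset.mem_Icc] at hs
      show ℓ+m-(ℓ+m-s) = s
      omega
    · intro k hk
      simp only [Finset.mem_Icc] at hk
      show f k = f (ℓ+m-(ℓ+m-k))
      rw [show ℓ+m-(ℓ+m-k) = k from by omega]
  -- expand the right side
  set G : ℕ → ℕ → ℝ := fun q j =>
      ((Nat.factorial (ℓ + m) : ℝ) * (-1 : ℝ) ^ (q - m) * (2 : ℝ) ^ ((m : ℤ) - 2 * (q:ℤ)) /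
        ((Nat.factorial (ℓ + m - 2 * q) : ℝ) * (Nat.factorial q : ℝ) *
          (Nat.factorial (q - m) : ℝ)))
        * ((-1:ℝ)^j * ((q-m).choose j : ℝ) * x^(2*j)) * x ^ (ℓ + m - 2 * q) with hG
  have hpow : ∀ p : ℕ, (1 - x^2)^p = ∑ j ∈ range (p+1), (-1:ℝ)^j * (p.choose j : ℝ) * x^(2*j) := by
    intro p
    rw [show (1 - x^2) = (-(x^2) + 1) from by ring, add_pow]
    refine Finset.sum_congr rfl fun j hj => ?_
    rw [neg_pow, ← pow_mul]
    ring
  have h4 : ∑ q ∈ Finset.Icc m Q,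
        ((Nat.factorial (ℓ + m) : ℝ) * (-1 : ℝ) ^ (q - m) * (2 : ℝ) ^ ((m : ℤ) - 2 * q) /
          ((Nat.factorial (ℓ + m - 2 * q) : ℝ) * (Nat.factorial q : ℝ) *
            (Nat.factorial (q - m) : ℝ))) *
          (1 - x ^ 2) ^ (q - m) * x ^ (ℓ + m - 2 * q)
      = ∑ q ∈ Finset.Icc m Q, ∑ j ∈ range (q-m+1), G q j := by
    refine Finset.sum_congr rfl fun q hq => ?_
    rw [hpow (q-m), Finset.mul_sum, Finset.sum_mul]
  have h5 : ∑ q ∈ Finset.Icc m Q, ∑ j ∈ range (q-m+1), G q j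
      = ∑ s ∈ Finset.Icc m Q, ∑ t ∈ range (Q-s+1), G (s+t) t := by
    rw [Finset.sum_sigma', Finset.sum_sigma']
    refine Finset.sum_nbij' (fun p => ⟨p.1 - p.2, p.2⟩) (fun p => ⟨p.1 + p.2, p.2⟩) ?_ ?_ ?_ ?_ ?_
    · rintro ⟨q, j⟩ hp
      simp only [Finset.mem_sigma, Finset.mem_Icc, Finset.mem_range] at *
      omega
    · rintro ⟨s, t⟩ hp
      simp only [Finset.mem_sigma, Finset.mem_Icc, Finset.mem_range] at *
      omega
    · rintro ⟨q, j⟩ hp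
      simp only [Finset.mem_sigma, Finset.mem_Icc, Finset.mem_range] at hp
      have e : q - j + j = q := by omega
      simp [e]
    · rintro ⟨s, t⟩ hp
      simp only [Finset.mem_sigma, Finset.mem_Icc, Finset.mem_range] at hp
      have e : s + t - t = s := by omega
      simp [e]
    · rintro ⟨q, j⟩ hp
      simp only [Finset.mem_sigma, Finset.mem_Icc, Finset.mem_range] at hp
      simp only []
      rw [show q - j + j = q from by omega]
  have h6 : ∀ s ∈ Finset.Icc m Q, ∑ t ∈ range (Q-s+1), G (s+t) t = f (ℓ+m-s) := by
    intro s hs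
    simp only [Finset.mem_Icc] at hs
    exact legendre_inner_sum ℓ m s hm hs.1 hs.2 x
  rw [h1, h2, h3, h4, h5, Finset.sum_congr rfl h6]
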